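/- Define, for k ∈ ℝ³ with k₁² + k₂² ≠ 0, the polarization vectors ε₁(k) := (k₂, −k₁, 0)/√(k₁² + k₂²) and ε₂(k) := (k/‖k‖) × ε₁(k) (the cross product of the unit vector k/‖k‖ with ε₁(k)). Then for every such k, every λ ∈ {1,2}, and every j ∈ {1,2,3}, the partial derivative ∂ε_λ/∂k_j exists at k and its Euclidean norm satisfies ‖∂ε_λ(k)/∂k_j‖ ≤ 1/√(k₁² + k₂²). -/

import Mathlib

/-- The first polarization vector `ε₁(k) = (k₂, −k₁, 0)/√(k₁² + k₂²)`. -/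
noncomputable def eps1 (k : EuclideanSpace ℝ (Fin 3)) : EuclideanSpace ℝ (Fin 3) :=
  (Real.sqrt (k 0 ^ 2 + k 1 ^ 2))⁻¹ •
    (EuclideanSpace.equiv (Fin 3) ℝ).symm ![k 1, -(k 0), 0]

/-- The vector cross product on `ℝ³`. -/
noncomputable def cross3 (u v : EuclideanSpace ℝ (Fin 3)) : EuclideanSpace ℝ (Fin 3) :=
  (EuclideanSpace.equiv (Fin 3) ℝ).symm
    ![u 1 * v 2 - u 2 * v 1, u 2 * v 0 - u 0 * v 2, u 0 * v 1 - u 1 * v 0]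

/-- The second polarization vector `ε₂(k) = (k/‖k‖) × ε₁(k)`. -/
noncomputable def eps2 (k : EuclideanSpace ℝ (Fin 3)) : EuclideanSpace ℝ (Fin 3) :=
  cross3 (‖k‖⁻¹ • k) (eps1 k)

lemma hasDerivAt_euc {f : ℝ → EuclideanSpace ℝ (Fin 3)} {v : EuclideanSpace ℝ (Fin 3)} {x : ℝ}
    (h : ∀ i, HasDerivAt (fun t => f t i) (v i) x) : HasDerivAt f v x := by
  have h1 : HasDerivAt (fun t => (EuclideanSpace.equiv (Fin 3) ℝ) (f t))
      ((EuclideanSpace.equiv (Fin 3) ℝ) v) x := hasDerivAt_pi.2 h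
  have h2 := ((EuclideanSpace.equiv (Fin 3) ℝ).symm.toContinuousLinearMap.hasFDerivAt).comp_hasDerivAt x h1
  simpa [Function.comp_def] using h2

lemma norm_euc_le (x y z m : ℝ) (hm : 0 ≤ m) (h : x^2 + y^2 + z^2 ≤ m^2) :
    ‖(EuclideanSpace.equiv (Fin 3) ℝ).symm ![x, y, z]‖ ≤ m := by
  rw [EuclideanSpace.norm_eq]
  calc Real.sqrt (∑ i, ‖((EuclideanSpace.equiv (Fin 3) ℝ).symm ![x,y,z] : EuclideanSpace ℝ (Fin 3)) i‖^2)
      = Real.sqrt (x^2 + y^2 + z^2) := by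
        congr 1
        simp [Fin.sum_univ_three, sq_abs]
    _ ≤ Real.sqrt (m^2) := Real.sqrt_le_sqrt h
    _ = m := Real.sqrt_sq hm

lemma hasDerivAt_aff (a d : ℝ) (t : ℝ) : HasDerivAt (fun t : ℝ => a + t * d) d t := by
  simpa using ((hasDerivAt_id t).mul_const d).const_add a

set_option maxHeartbeats 1000000 in
lemma eps1_key (k D : EuclideanSpace ℝ (Fin 3)) (hk : k 0 ^ 2 + k 1 ^ 2 ≠ 0)
    (hd : D 0 ^ 2 + D 1 ^ 2 + D 2 ^ 2 ≤ 1) :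
    ∃ v : EuclideanSpace ℝ (Fin 3),
      HasDerivAt (fun t : ℝ => eps1 (k + t • D)) v 0 ∧
      ‖v‖ ≤ 1 / Real.sqrt (k 0 ^ 2 + k 1 ^ 2) := by
  set a := k 0 with ha; set b := k 1 with hb; set d0 := D 0 with hd0; set d1 := D 1 with hd1
  have hab : 0 < a^2 + b^2 := lt_of_le_of_ne (by positivity) (Ne.symm hk)
  set ρ := Real.sqrt (a^2 + b^2) with hρdef
  have hρ : 0 < ρ := Real.sqrt_pos.2 hab
  have hρ2 : ρ^2 = a^2 + b^2 := Real.sq_sqrt hab.le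
  set p := a*d0 + b*d1 with hp
  have hg : HasDerivAt (fun t : ℝ => (a + t*d0)^2 + (b + t*d1)^2) (2*a*d0 + 2*b*d1) 0 := by
    have h1 := ((hasDerivAt_aff a d0 0).pow 2)
    have h2 := ((hasDerivAt_aff b d1 0).pow 2)
    refine (h1.add h2).congr_deriv ?_
    push_cast; ring
  have hS : HasDerivAt (fun t : ℝ => Real.sqrt ((a + t*d0)^2 + (b + t*d1)^2)) (p / ρ) 0 := by
    have := hg.sqrt (by simpa using hab.ne')
    refine (this).congr_deriv ?_
    simp only [hp]
    rw [show (a + 0*d0)^2 + (b + 0*d1)^2 = a^2 + b^2 by ring]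
    rw [← hρdef]
    field_simp
  have hSinv : HasDerivAt (fun t : ℝ => (Real.sqrt ((a + t*d0)^2 + (b + t*d1)^2))⁻¹)
      (-(p/ρ^3)) 0 := by
    have := hS.inv (by
      rw [show (a + 0*d0)^2 + (b + 0*d1)^2 = a^2 + b^2 by ring, ← hρdef]; exact hρ.ne')
    refine (this).congr_deriv ?_
    rw [show (a + 0*d0)^2 + (b + 0*d1)^2 = a^2 + b^2 by ring, ← hρdef]
    field_simp
  have hc0 : HasDerivAt (fun t : ℝ => eps1 (k + t • D) 0) (d1/ρ - b*p/ρ^3) 0 := by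
    have he : (fun t : ℝ => eps1 (k + t • D) 0)
        = fun t => (Real.sqrt ((a + t*d0)^2 + (b + t*d1)^2))⁻¹ * (b + t*d1) := by
      funext t; simp [eps1, PiLp.add_apply, PiLp.smul_apply, smul_eq_mul]; rfl
    rw [he]
    have h := hSinv.mul (hasDerivAt_aff b d1 0)
    refine (h).congr_deriv ?_
    rw [show (a + 0*d0)^2 + (b + 0*d1)^2 = a^2 + b^2 by ring, ← hρdef]
    field_simp; ring
  have hc1 : HasDerivAt (fun t : ℝ => eps1 (k + t • D) 1) (-(d0/ρ - a*p/ρ^3)) 0 := by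
    have he : (fun t : ℝ => eps1 (k + t • D) 1)
        = fun t => (Real.sqrt ((a + t*d0)^2 + (b + t*d1)^2))⁻¹ * (-(a + t*d0)) := by
      funext t; simp [eps1, PiLp.add_apply, PiLp.smul_apply, smul_eq_mul]; rfl
    rw [he]
    have h := hSinv.mul ((hasDerivAt_aff a d0 0).neg)
    refine (h).congr_deriv ?_
    simp only [Pi.neg_apply]
    rw [show (a + 0*d0)^2 + (b + 0*d1)^2 = a^2 + b^2 by ring, ← hρdef]
    field_simp; ring
  have hc2 : HasDerivAt (fun t : ℝ => eps1 (k + t • D) 2) 0 0 := by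
    have he : (fun t : ℝ => eps1 (k + t • D) 2) = fun _ => (0:ℝ) := by
      funext t; simp [eps1, PiLp.add_apply, PiLp.smul_apply, smul_eq_mul]
    rw [he]; exact hasDerivAt_const 0 0
  refine ⟨(EuclideanSpace.equiv (Fin 3) ℝ).symm
    ![d1/ρ - b*p/ρ^3, -(d0/ρ - a*p/ρ^3), 0], hasDerivAt_euc ?_, ?_⟩
  · intro i
    fin_cases i
    · simpa using hc0
    · simpa using hc1
    · simpa using hc2
  · refine norm_euc_le _ _ _ _ (by positivity) ?_
    have hq : (a*d1 - b*d0)^2 ≤ ρ^2 := by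
      nlinarith [sq_nonneg (a*d0 + b*d1), sq_nonneg (D 2)]
    have e0 : d1/ρ - b*p/ρ^3 = a*(a*d1-b*d0)/ρ^3 := by
      rw [hp]; field_simp; linear_combination d1 * hρ2
    have e1 : -(d0/ρ - a*p/ρ^3) = b*(a*d1-b*d0)/ρ^3 := by
      rw [hp]; field_simp; linear_combination (-d0) * hρ2
    rw [e0, e1]
    have key : (a*(a*d1-b*d0)/ρ^3)^2 + (b*(a*d1-b*d0)/ρ^3)^2 + (0:ℝ)^2
        = (a^2+b^2)*(a*d1-b*d0)^2/ρ^6 := by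
      field_simp; ring
    rw [key, ← hρ2]
    rw [show ρ^2*(a*d1-b*d0)^2/ρ^6 = (a*d1-b*d0)^2/ρ^4 by field_simp]
    rw [div_pow, one_pow, div_le_div_iff₀ (by positivity) (by positivity)]
    nlinarith [mul_le_mul_of_nonneg_right hq (sq_nonneg ρ)]

set_option maxHeartbeats 1000000 in
lemma eps2_key (k D : EuclideanSpace ℝ (Fin 3)) (hk : k 0 ^ 2 + k 1 ^ 2 ≠ 0)
    (hd : D 0 ^ 2 + D 1 ^ 2 + D 2 ^ 2 ≤ 1) :
    ∃ v : EuclideanSpace ℝ (Fin 3),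
      HasDerivAt (fun t : ℝ => eps2 (k + t • D)) v 0 ∧
      ‖v‖ ≤ 1 / Real.sqrt (k 0 ^ 2 + k 1 ^ 2) := by
  set a := k 0 with ha; set b := k 1 with hb; set c := k 2 with hc
  set d0 := D 0 with hd0; set d1 := D 1 with hd1; set d2 := D 2 with hd2
  have hab : 0 < a^2 + b^2 := lt_of_le_of_ne (by positivity) (Ne.symm hk)
  have habc : 0 < a^2 + b^2 + c^2 := by positivity
  set ρ := Real.sqrt (a^2 + b^2) with hρdef
  set r := Real.sqrt (a^2 + b^2 + c^2) with hrdef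
  have hρ : 0 < ρ := Real.sqrt_pos.2 hab
  have hr : 0 < r := Real.sqrt_pos.2 habc
  have hρ2 : ρ^2 = a^2 + b^2 := Real.sq_sqrt hab.le
  have hr2 : r^2 = a^2 + b^2 + c^2 := Real.sq_sqrt habc.le
  have hr2' : r^2 = ρ^2 + c^2 := by rw [hr2, hρ2]
  have hg : HasDerivAt (fun t : ℝ => (a + t*d0)^2 + (b + t*d1)^2) (2*a*d0 + 2*b*d1) 0 := by
    have h1 := ((hasDerivAt_aff a d0 0).pow 2)
    have h2 := ((hasDerivAt_aff b d1 0).pow 2)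
    refine (h1.add h2).congr_deriv ?_; push_cast; ring
  have hg3 : HasDerivAt (fun t : ℝ => (a + t*d0)^2 + (b + t*d1)^2 + (c + t*d2)^2)
      (2*a*d0 + 2*b*d1 + 2*c*d2) 0 := by
    have h3 := ((hasDerivAt_aff c d2 0).pow 2)
    refine (hg.add h3).congr_deriv ?_; push_cast; ring
  have hSinv : HasDerivAt (fun t : ℝ => (Real.sqrt ((a + t*d0)^2 + (b + t*d1)^2))⁻¹)
      (-((a*d0+b*d1)/ρ^3)) 0 := by
    have hS := hg.sqrt (by simpa using hab.ne')
    have := hS.inv (by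
      simp only [zero_mul, add_zero]
      rw [← hρdef]; exact hρ.ne')
    refine (this).congr_deriv ?_
    simp only [zero_mul, add_zero]
    rw [← hρdef]
    field_simp <;> ring_nf <;> try tauto
  have hRinv : HasDerivAt (fun t : ℝ => (Real.sqrt ((a + t*d0)^2 + (b + t*d1)^2 + (c + t*d2)^2))⁻¹)
      (-((a*d0+b*d1+c*d2)/r^3)) 0 := by
    have hR := hg3.sqrt (by simpa using habc.ne')
    have := hR.inv (by
      simp only [zero_mul, add_zero]
      rw [← hrdef]; exact hr.ne')
    refine (this).congr_deriv ?_
    simp only [zero_mul, add_zero]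
    rw [← hrdef]
    field_simp <;> ring_nf <;> try tauto
  -- component derivatives, with values written over the common denominator ρ³r³
  have hc0 : HasDerivAt (fun t : ℝ => eps2 (k + t • D) 0)
      (((d2*ρ^2 - (a*d0+b*d1)*c)*a*ρ^2 - (a*d1-b*d0)*b*c*r^2)/(ρ^3*r^3)) 0 := by
    have he : (fun t : ℝ => eps2 (k + t • D) 0)
        = fun t => (Real.sqrt ((a + t*d0)^2 + (b + t*d1)^2 + (c + t*d2)^2))⁻¹ * (c + t*d2) *
          ((Real.sqrt ((a + t*d0)^2 + (b + t*d1)^2))⁻¹ * (a + t*d0)) := by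
      funext t
      simp [eps2, cross3, eps1, PiLp.add_apply, PiLp.smul_apply, smul_eq_mul,
        EuclideanSpace.norm_eq, Fin.sum_univ_three, Real.norm_eq_abs, sq_abs]
      try ring
    rw [he]
    have h := (hRinv.mul (hasDerivAt_aff c d2 0)).mul (hSinv.mul (hasDerivAt_aff a d0 0))
    refine (h).congr_deriv ?_
    simp only [Pi.mul_apply, Pi.neg_apply]
    simp only [zero_mul, add_zero]
    rw [← hρdef, ← hrdef]
    rw [show ((d2*ρ^2 - (a*d0+b*d1)*c)*a*ρ^2 - (a*d1-b*d0)*b*c*r^2)/(ρ^3*r^3)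
        = (a*(d2*r^2 - (a*d0+b*d1+c*d2)*c)*ρ^2 + c*(d0*ρ^2 - (a*d0+b*d1)*a)*r^2)/(ρ^3*r^3) by
      rw [hρ2, hr2]; ring]
    field_simp <;> ring_nf <;> try tauto
  have hc1 : HasDerivAt (fun t : ℝ => eps2 (k + t • D) 1)
      (((d2*ρ^2 - (a*d0+b*d1)*c)*b*ρ^2 + (a*d1-b*d0)*a*c*r^2)/(ρ^3*r^3)) 0 := by
    have he : (fun t : ℝ => eps2 (k + t • D) 1)
        = fun t => (Real.sqrt ((a + t*d0)^2 + (b + t*d1)^2 + (c + t*d2)^2))⁻¹ * (c + t*d2) *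
          ((Real.sqrt ((a + t*d0)^2 + (b + t*d1)^2))⁻¹ * (b + t*d1)) := by
      funext t
      simp [eps2, cross3, eps1, PiLp.add_apply, PiLp.smul_apply, smul_eq_mul,
        EuclideanSpace.norm_eq, Fin.sum_univ_three, Real.norm_eq_abs, sq_abs]
      try ring
    rw [he]
    have h := (hRinv.mul (hasDerivAt_aff c d2 0)).mul (hSinv.mul (hasDerivAt_aff b d1 0))
    refine (h).congr_deriv ?_
    simp only [Pi.mul_apply, Pi.neg_apply]
    simp only [zero_mul, add_zero]
    rw [← hρdef, ← hrdef]
    rw [show ((d2*ρ^2 - (a*d0+b*d1)*c)*b*ρ^2 + (a*d1-b*d0)*a*c*r^2)/(ρ^3*r^3)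
        = (b*(d2*r^2 - (a*d0+b*d1+c*d2)*c)*ρ^2 + c*(d1*ρ^2 - (a*d0+b*d1)*b)*r^2)/(ρ^3*r^3) by
      rw [hρ2, hr2]; ring]
    field_simp <;> ring_nf <;> try tauto
  have hc2 : HasDerivAt (fun t : ℝ => eps2 (k + t • D) 2)
      (((d2*ρ^2 - (a*d0+b*d1)*c)*c*ρ^2)/(ρ^3*r^3)) 0 := by
    have he : (fun t : ℝ => eps2 (k + t • D) 2)
        = fun t => (Real.sqrt ((a + t*d0)^2 + (b + t*d1)^2 + (c + t*d2)^2))⁻¹ * (a + t*d0) *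
          ((Real.sqrt ((a + t*d0)^2 + (b + t*d1)^2))⁻¹ * (-(a + t*d0)))
          - (Real.sqrt ((a + t*d0)^2 + (b + t*d1)^2 + (c + t*d2)^2))⁻¹ * (b + t*d1) *
          ((Real.sqrt ((a + t*d0)^2 + (b + t*d1)^2))⁻¹ * (b + t*d1)) := by
      funext t
      simp [eps2, cross3, eps1, PiLp.add_apply, PiLp.smul_apply, smul_eq_mul,
        EuclideanSpace.norm_eq, Fin.sum_univ_three, Real.norm_eq_abs, sq_abs]
      try ring
    rw [he]
    have h := ((hRinv.mul (hasDerivAt_aff a d0 0)).mul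
        (hSinv.mul ((hasDerivAt_aff a d0 0).neg))).sub
      ((hRinv.mul (hasDerivAt_aff b d1 0)).mul (hSinv.mul (hasDerivAt_aff b d1 0)))
    refine (h).congr_deriv ?_
    simp only [Pi.mul_apply, Pi.neg_apply]
    simp only [zero_mul, add_zero]
    rw [← hρdef, ← hrdef]
    rw [show ((d2*ρ^2 - (a*d0+b*d1)*c)*c*ρ^2)/(ρ^3*r^3)
        = ((a^2+b^2)*((a*d0+b*d1+c*d2)*ρ^2 + (a*d0+b*d1)*r^2) - 2*(a*d0+b*d1)*ρ^2*r^2)/(ρ^3*r^3) by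
      rw [hρ2, hr2]; ring]
    field_simp <;> ring_nf <;> try tauto
  refine ⟨(EuclideanSpace.equiv (Fin 3) ℝ).symm
    ![((d2*ρ^2 - (a*d0+b*d1)*c)*a*ρ^2 - (a*d1-b*d0)*b*c*r^2)/(ρ^3*r^3),
      ((d2*ρ^2 - (a*d0+b*d1)*c)*b*ρ^2 + (a*d1-b*d0)*a*c*r^2)/(ρ^3*r^3),
      ((d2*ρ^2 - (a*d0+b*d1)*c)*c*ρ^2)/(ρ^3*r^3)], hasDerivAt_euc ?_, ?_⟩
  · intro i
    fin_cases i
    · simpa using hc0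
    · simpa using hc1
    · simpa using hc2
  · refine norm_euc_le _ _ _ _ (by positivity) ?_
    have hpq : (a*d0+b*d1)^2 + (a*d1-b*d0)^2 = (d0^2+d1^2)*ρ^2 := by rw [hρ2]; ring
    have hq1 : (a*d1-b*d0)^2 ≤ ρ^2 := by
      nlinarith [sq_nonneg (a*d0+b*d1), sq_nonneg d2,
        mul_nonneg (show (0:ℝ) ≤ 1 - d0^2 - d1^2 by nlinarith [sq_nonneg d2]) (sq_nonneg ρ)]
    have hQb : (d2*ρ^2 - (a*d0+b*d1)*c)^2
        ≤ (d2^2*ρ^2 + (a*d0+b*d1)^2)*(ρ^2 + c^2) := by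
      nlinarith [mul_nonneg (sq_nonneg ρ) (sq_nonneg (d2*c + (a*d0+b*d1)))]
    have step : (d2^2*ρ^2 + (a*d0+b*d1)^2)*ρ^2 + (a*d1-b*d0)^2*c^2 ≤ ρ^2*r^2 := by
      rw [hr2']
      rcases le_total (c^2) (ρ^2) with h|h
      · nlinarith [hpq, sq_nonneg (a*d1-b*d0), sq_nonneg ρ, sq_nonneg c,
          mul_nonneg (show (0:ℝ) ≤ 1 - d0^2 - d1^2 - d2^2 by linarith) (sq_nonneg ρ),
          mul_nonneg (sub_nonneg.2 h) (sq_nonneg (a*d1-b*d0)),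
          mul_nonneg (sq_nonneg ρ) (sq_nonneg c),
          mul_le_mul_of_nonneg_right
            (show d0^2+d1^2+d2^2 ≤ 1 from hd) (mul_nonneg (sq_nonneg ρ) (sq_nonneg ρ))]
      · nlinarith [hpq, sq_nonneg (a*d1-b*d0), sq_nonneg ρ, sq_nonneg c,
          mul_le_mul_of_nonneg_right hq1 (sub_nonneg.2 h),
          mul_le_mul_of_nonneg_right
            (show d0^2+d1^2+d2^2 ≤ 1 from hd) (mul_nonneg (sq_nonneg ρ) (sq_nonneg ρ))]
    have key' : (d2*ρ^2 - (a*d0+b*d1)*c)^2*ρ^2 + (a*d1-b*d0)^2*c^2*r^2 ≤ ρ^2*r^4 := by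
      have h1 : (d2*ρ^2 - (a*d0+b*d1)*c)^2*ρ^2
          ≤ (d2^2*ρ^2 + (a*d0+b*d1)^2)*r^2*ρ^2 := by
        rw [hr2']
        nlinarith [mul_le_mul_of_nonneg_right hQb (sq_nonneg ρ)]
      have h2 := mul_le_mul_of_nonneg_left step (sq_nonneg r)
      nlinarith [h1, h2]
    have key : ((d2*ρ^2 - (a*d0+b*d1)*c)*a*ρ^2 - (a*d1-b*d0)*b*c*r^2)^2
        + ((d2*ρ^2 - (a*d0+b*d1)*c)*b*ρ^2 + (a*d1-b*d0)*a*c*r^2)^2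
        + ((d2*ρ^2 - (a*d0+b*d1)*c)*c*ρ^2)^2 ≤ ρ^4*r^6 := by
      have hexp : ((d2*ρ^2 - (a*d0+b*d1)*c)*a*ρ^2 - (a*d1-b*d0)*b*c*r^2)^2
          + ((d2*ρ^2 - (a*d0+b*d1)*c)*b*ρ^2 + (a*d1-b*d0)*a*c*r^2)^2
          + ((d2*ρ^2 - (a*d0+b*d1)*c)*c*ρ^2)^2
          = (d2*ρ^2 - (a*d0+b*d1)*c)^2*ρ^4*(a^2+b^2+c^2)
            + (a*d1-b*d0)^2*c^2*r^4*(a^2+b^2) := by ring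
      rw [hexp, ← hr2, ← hρ2]
      nlinarith [mul_le_mul_of_nonneg_left key' (mul_nonneg (sq_nonneg ρ) (sq_nonneg r))]
    calc (((d2*ρ^2 - (a*d0+b*d1)*c)*a*ρ^2 - (a*d1-b*d0)*b*c*r^2)/(ρ^3*r^3))^2
          + (((d2*ρ^2 - (a*d0+b*d1)*c)*b*ρ^2 + (a*d1-b*d0)*a*c*r^2)/(ρ^3*r^3))^2
          + (((d2*ρ^2 - (a*d0+b*d1)*c)*c*ρ^2)/(ρ^3*r^3))^2
        = (((d2*ρ^2 - (a*d0+b*d1)*c)*a*ρ^2 - (a*d1-b*d0)*b*c*r^2)^2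
            + ((d2*ρ^2 - (a*d0+b*d1)*c)*b*ρ^2 + (a*d1-b*d0)*a*c*r^2)^2
            + ((d2*ρ^2 - (a*d0+b*d1)*c)*c*ρ^2)^2)/(ρ^6*r^6) := by ring
      _ ≤ (ρ^4*r^6)/(ρ^6*r^6) := by
          apply div_le_div_of_nonneg_right key (by positivity) |>.trans_eq rfl
      _ = (1/ρ)^2 := by field_simp

theorem stmt11 (k : EuclideanSpace ℝ (Fin 3)) (hk : k 0 ^ 2 + k 1 ^ 2 ≠ 0) (j : Fin 3) :
    (∃ v : EuclideanSpace ℝ (Fin 3),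
        HasDerivAt (fun t : ℝ => eps1 (k + t • EuclideanSpace.single j (1 : ℝ))) v 0 ∧
        ‖v‖ ≤ 1 / Real.sqrt (k 0 ^ 2 + k 1 ^ 2)) ∧
    (∃ v : EuclideanSpace ℝ (Fin 3),
        HasDerivAt (fun t : ℝ => eps2 (k + t • EuclideanSpace.single j (1 : ℝ))) v 0 ∧
        ‖v‖ ≤ 1 / Real.sqrt (k 0 ^ 2 + k 1 ^ 2)) := by
  have hd : (EuclideanSpace.single j (1:ℝ)) 0 ^ 2 + (EuclideanSpace.single j (1:ℝ)) 1 ^ 2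
      + (EuclideanSpace.single j (1:ℝ)) 2 ^ 2 ≤ 1 := by
    fin_cases j <;> simp [EuclideanSpace.single_apply] <;> norm_num
  exact ⟨eps1_key k _ hk hd, eps2_key k _ hk hd⟩
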